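/- Let f : ℝⁿ → ℝ be σ-strongly convex (σ > 0) over a closed convex set X, let u ↦ p†(u) assign to each dual point the unique minimizer of the Lagrangian L(·, u) over X, and suppose ψ(u) = L(p†(u), u) is the concave dual function with unique coupling via a linear map. If a sequence u⁽ᵏ⁾ satisfies Φ* − ψ(u⁽ᵏ⁾) ≤ ε_k where Φ* is the primal optimal value, then ‖p†(u⁽ᵏ⁾) − p*‖² ≤ (2/σ) ε_k, where p* is the unique primal minimizer. -/
import Mathlib

/-- Growth bound at a minimizer of a strongly convex function. -/
lemma strong_min_growth {E : Type*} [NormedAddCommGroup E] [NormedSpace ℝ E]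
    {X : Set E} {σ : ℝ} {f : E → ℝ} (hf : StrongConvexOn X σ f)
    {q p : E} (hq : q ∈ X) (hp : p ∈ X) (hmin : ∀ x ∈ X, f q ≤ f x) :
    σ / 2 * ‖p - q‖ ^ 2 ≤ f p - f q := by
  have key : ∀ θ : ℝ, 0 < θ → θ < 1 → (1 - θ) * (σ / 2 * ‖p - q‖ ^ 2) ≤ f p - f q := by
    intro θ hθ0 hθ1
    have h1θ : (0:ℝ) ≤ 1 - θ := by linarith
    have hadd : θ + (1 - θ) = 1 := by ring
    have hcv := hf.2 hp hq hθ0.le h1θ hadd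
    have hmem : θ • p + (1 - θ) • q ∈ X := hf.1 hp hq hθ0.le h1θ hadd
    have hge := hmin _ hmem
    have : f q ≤ θ * f p + (1 - θ) * f q - θ * (1 - θ) * (σ / 2 * ‖p - q‖ ^ 2) := by
      simpa [smul_eq_mul] using hge.trans hcv
    have h2 : θ * ((1 - θ) * (σ / 2 * ‖p - q‖ ^ 2)) ≤ θ * (f p - f q) := by nlinarith
    exact le_of_mul_le_mul_left (by linarith) hθ0
  by_cases hpq : ‖p - q‖ = 0
  · have := hmin p hp
    simp [hpq]
    linarith
  · apply le_of_forall_pos_le_add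
    intro e he
    set c : ℝ := σ / 2 * ‖p - q‖ ^ 2 with hc
    rcases le_or_gt c 0 with hc0 | hc0
    · have := key (1/2) (by norm_num) (by norm_num)
      nlinarith
    · set θ : ℝ := min (1/2) (e / c) with hθ
      have hθ0 : 0 < θ := lt_min (by norm_num) (div_pos he hc0)
      have hθ1 : θ < 1 := lt_of_le_of_lt (min_le_left _ _) (by norm_num)
      have hθc : θ * c ≤ e := by
        have : θ ≤ e / c := min_le_right _ _
        calc θ * c ≤ (e / c) * c := by nlinarith
          _ = e := by field_simp
      have := key θ hθ0 hθ1
      nlinarith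

/-- Primal recovery under strong convexity: if `L(·,u)` is σ-strongly
convex on the closed convex set `X`, `p†(u)` minimizes `L(·,u)` over `X`,
`ψ(u) = L(p†(u), u)`, weak duality `L(p*, u_k) ≤ Φ*` holds, and the dual gap satisfies
`Φ* − ψ(u_k) ≤ ε_k`, then `‖p†(u_k) − p*‖² ≤ (2/σ) ε_k`. -/
theorem primal_recovery_bound (n : ℕ) (σ : ℝ) (hσ : 0 < σ)
    (D : Type) (X : Set (EuclideanSpace ℝ (Fin n)))
    (hXconv : Convex ℝ X) (hXcl : IsClosed X)
    (L : EuclideanSpace ℝ (Fin n) → D → ℝ)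
    (hstrong : ∀ u : D, StrongConvexOn X σ (fun p => L p u))
    (pdag : D → EuclideanSpace ℝ (Fin n))
    (hpdag_mem : ∀ u, pdag u ∈ X)
    (hpdag_min : ∀ u, ∀ p ∈ X, L (pdag u) u ≤ L p u)
    (ψ : D → ℝ) (hψ : ∀ u, ψ u = L (pdag u) u)
    (Φstar : ℝ) (pstar : EuclideanSpace ℝ (Fin n)) (hpstar : pstar ∈ X)
    (hweak : ∀ u : D, L pstar u ≤ Φstar)
    (u : ℕ → D) (ε : ℕ → ℝ) (hgap : ∀ k, Φstar - ψ (u k) ≤ ε k) :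
    ∀ k, ‖pdag (u k) - pstar‖ ^ 2 ≤ (2 / σ) * ε k := by
  intro k
  have hgrow := strong_min_growth (hstrong (u k)) (hpdag_mem (u k)) hpstar
    (fun x hx => hpdag_min (u k) x hx)
  have h1 : σ / 2 * ‖pstar - pdag (u k)‖ ^ 2 ≤ ε k := by
    have := hweak (u k)
    have := hgap k
    rw [hψ (u k)] at *
    linarith
  have hnorm : ‖pdag (u k) - pstar‖ = ‖pstar - pdag (u k)‖ := norm_sub_rev _ _
  rw [hnorm]
  rw [div_mul_eq_mul_div, le_div_iff₀ hσ] at *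
  nlinarith
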